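/- Finite-horizon dynamic programming (Bellman's principle of optimality): Let S and A be finite nonempty types, T a natural number (the horizon), p : S → A → S → ℝ transition probabilities with p s a s' ≥ 0 and ∑_{s'} p s a s' = 1 for all s, a, and r : ℕ → S → A → ℝ a reward function. Define V : ℕ → S → ℝ by backward induction: V T s = max_{a} r T s a, and V t s = max_{a} (r t s a + ∑_{s'} p s a s' · V (t+1) s') for t < T. For a deterministic Markov policy π : ℕ → S → A and initial state s₀, define the expected total reward J π s₀ = ∑ over all trajectories ω : Fin (T+1) → S with ω 0 = s₀ of (∏_{t=0}^{T−1} p (ω t) (π t (ω t)) (ω (t+1))) · (∑_{t=0}^{T} r t (ω t) (π t (ω t))). Then for every s₀, V 0 s₀ = max over all policies π of J π s₀. -/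

import Mathlib

section DPAux

open Finset

variable {S : Type*} [Fintype S] [DecidableEq S]

/-- backward-recursion value of a fixed (already plugged-in) policy -/
noncomputable def Wrec (q : ℕ → S → S → ℝ) (g : ℕ → S → ℝ) : ℕ → ℕ → S → ℝ
  | 0, t₀, s => g t₀ s
  | n+1, t₀, s => g t₀ s + ∑ s', q t₀ s s' * Wrec q g n (t₀+1) s'

lemma cons_bij (n : ℕ) (s₀ : S) (f : (Fin (n+2) → S) → ℝ) :
    ∑ ω ∈ univ.filter (fun ω : Fin (n+2) → S => ω 0 = s₀), f ω
      = ∑ τ : Fin (n+1) → S, f (Fin.cons s₀ τ) := by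
  apply Finset.sum_bij' (i := fun ω _ => Fin.tail ω) (j := fun τ _ => Fin.cons s₀ τ)
    (hi := fun ω _ => mem_univ _) (hj := fun τ _ => by simp)
  · intro ω hω
    simp only [mem_filter, mem_univ, true_and] at hω
    rw [← hω, Fin.cons_self_tail]
  · intro τ _
    exact Fin.tail_cons _ _
  · intro ω hω
    simp only [mem_filter, mem_univ, true_and] at hω
    rw [← hω, Fin.cons_self_tail]

lemma filter_fin_one (s₀ : S) :
    univ.filter (fun ω : Fin 1 → S => ω 0 = s₀) = {fun _ => s₀} := by
  ext ω
  simp only [mem_filter, mem_univ, true_and, mem_singleton]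
  constructor
  · intro h; funext i; rw [Fin.eq_zero i]; exact h
  · intro h; rw [h]

lemma mass (q : ℕ → S → S → ℝ) (hq : ∀ t s, ∑ s', q t s s' = 1) :
    ∀ (n t₀ : ℕ) (s₀ : S),
      ∑ ω ∈ univ.filter (fun ω : Fin (n+1) → S => ω 0 = s₀),
        ∏ i : Fin n, q (t₀ + i) (ω i.castSucc) (ω i.succ) = 1 := by
  intro n
  induction n with
  | zero => intro t₀ s₀; rw [filter_fin_one]; simp
  | succ n ih =>
    intro t₀ s₀
    rw [cons_bij]
    have key : ∀ τ : Fin (n+1) → S,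
        ∏ i : Fin (n+1), q (t₀ + i) ((Fin.cons s₀ τ : Fin (_+1) → S) i.castSucc) ((Fin.cons s₀ τ : Fin (_+1) → S) i.succ)
          = q t₀ s₀ (τ 0) * ∏ i : Fin n, q (t₀ + 1 + i) (τ i.castSucc) (τ i.succ) := by
      intro τ
      rw [Fin.prod_univ_succ]
      simp only [Fin.castSucc_zero, Fin.cons_zero, Fin.cons_succ, Fin.val_zero, add_zero,
        Fin.val_succ, ← Fin.succ_castSucc, Fin.cons_succ]
      congr 1
      apply Finset.prod_congr rfl
      intro i _
      congr 1
      omega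
    simp_rw [key]
    rw [← Finset.sum_fiberwise (univ : Finset (Fin (n+1) → S)) (fun τ => τ 0)
      (fun τ => q t₀ s₀ (τ 0) * ∏ i : Fin n, q (t₀ + 1 + i) (τ i.castSucc) (τ i.succ))]
    have : ∀ s' : S,
        ∑ τ ∈ univ.filter (fun τ : Fin (n+1) → S => τ 0 = s'),
          q t₀ s₀ (τ 0) * ∏ i : Fin n, q (t₀ + 1 + i) (τ i.castSucc) (τ i.succ)
        = q t₀ s₀ s' := by
      intro s'
      rw [Finset.sum_congr rfl (fun τ hτ => by
        rw [(mem_filter.1 hτ).2]), ← Finset.mul_sum, ih (t₀+1) s', mul_one]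
    simp_rw [this]
    exact hq t₀ s₀

lemma traj_eq_Wrec (q : ℕ → S → S → ℝ) (g : ℕ → S → ℝ) (hq : ∀ t s, ∑ s', q t s s' = 1) :
    ∀ (n t₀ : ℕ) (s₀ : S),
      ∑ ω ∈ univ.filter (fun ω : Fin (n+1) → S => ω 0 = s₀),
        (∏ i : Fin n, q (t₀ + i) (ω i.castSucc) (ω i.succ)) *
          (∑ i : Fin (n+1), g (t₀ + i) (ω i)) = Wrec q g n t₀ s₀ := by
  intro n
  induction n with
  | zero => intro t₀ s₀; rw [filter_fin_one]; simp [Wrec]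
  | succ n ih =>
    intro t₀ s₀
    rw [cons_bij]
    have key : ∀ τ : Fin (n+1) → S,
        (∏ i : Fin (n+1), q (t₀ + i) ((Fin.cons s₀ τ : Fin (_+1) → S) i.castSucc) ((Fin.cons s₀ τ : Fin (_+1) → S) i.succ)) *
          (∑ i : Fin (n+2), g (t₀ + i) ((Fin.cons s₀ τ : Fin (_+1) → S) i))
        = (q t₀ s₀ (τ 0) * ∏ i : Fin n, q (t₀ + 1 + i) (τ i.castSucc) (τ i.succ)) *
          (g t₀ s₀ + ∑ i : Fin (n+1), g (t₀ + 1 + i) (τ i)) := by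
      intro τ
      rw [Fin.prod_univ_succ, Fin.sum_univ_succ]
      simp only [Fin.castSucc_zero, Fin.cons_zero, Fin.cons_succ, Fin.val_zero, add_zero,
        Fin.val_succ, ← Fin.succ_castSucc, Fin.cons_succ]
      congr 2
      · apply Finset.prod_congr rfl; intro i _; congr 1; omega
      · apply Finset.sum_congr rfl; intro i _; congr 1; omega
    simp_rw [key]
    rw [← Finset.sum_fiberwise (univ : Finset (Fin (n+1) → S)) (fun τ => τ 0) _]
    have inner : ∀ s' : S,
        ∑ τ ∈ univ.filter (fun τ : Fin (n+1) → S => τ 0 = s'),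
          (q t₀ s₀ (τ 0) * ∏ i : Fin n, q (t₀ + 1 + i) (τ i.castSucc) (τ i.succ)) *
            (g t₀ s₀ + ∑ i : Fin (n+1), g (t₀ + 1 + i) (τ i))
        = q t₀ s₀ s' * (g t₀ s₀ + Wrec q g n (t₀+1) s') := by
      intro s'
      rw [Finset.sum_congr rfl (fun τ hτ => by rw [(mem_filter.1 hτ).2])]
      have expand : ∀ τ : Fin (n+1) → S,
          (q t₀ s₀ s' * ∏ i : Fin n, q (t₀ + 1 + i) (τ i.castSucc) (τ i.succ)) *
            (g t₀ s₀ + ∑ i : Fin (n+1), g (t₀ + 1 + i) (τ i))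
          = q t₀ s₀ s' * ((∏ i : Fin n, q (t₀ + 1 + i) (τ i.castSucc) (τ i.succ)) * g t₀ s₀
              + (∏ i : Fin n, q (t₀ + 1 + i) (τ i.castSucc) (τ i.succ)) *
                (∑ i : Fin (n+1), g (t₀ + 1 + i) (τ i))) := by
        intro τ; ring
      simp_rw [expand]
      rw [← Finset.mul_sum, Finset.sum_add_distrib, ← Finset.sum_mul, mass q hq n (t₀+1) s',
        one_mul, ih (t₀+1) s']
    simp_rw [inner]
    simp only [mul_add, Finset.sum_add_distrib, ← Finset.sum_mul, hq t₀ s₀, one_mul]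
    rw [Wrec]


end DPAux

theorem stmt11 {S A : Type*} [Fintype S] [Fintype A] [Nonempty S] [Nonempty A]
    [DecidableEq S]
    (T : ℕ) (p : S → A → S → ℝ)
    (hp_nonneg : ∀ s a s', 0 ≤ p s a s') (hp_row : ∀ s a, ∑ s', p s a s' = 1)
    (r : ℕ → S → A → ℝ)
    (V : ℕ → S → ℝ)
    (hVT : ∀ s, V T s = Finset.univ.sup' Finset.univ_nonempty (fun a : A => r T s a))
    (hVt : ∀ t < T, ∀ s, V t s = Finset.univ.sup' Finset.univ_nonempty
        (fun a : A => r t s a + ∑ s', p s a s' * V (t + 1) s'))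
    (J : (ℕ → S → A) → S → ℝ)
    (hJ : ∀ (π : ℕ → S → A) (s₀ : S), J π s₀ =
      ∑ ω ∈ Finset.univ.filter (fun ω : Fin (T + 1) → S => ω 0 = s₀),
        (∏ t : Fin T, p (ω t.castSucc) (π (t : ℕ) (ω t.castSucc)) (ω t.succ)) *
          (∑ t : Fin (T + 1), r (t : ℕ) (ω t) (π (t : ℕ) (ω t)))) :
    ∀ s₀ : S, IsGreatest {x : ℝ | ∃ π : ℕ → S → A, J π s₀ = x} (V 0 s₀) := by
  intro s₀
  -- J equals the recursive value of the policy
  have hJW : ∀ π : ℕ → S → A, J π s₀ =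
      Wrec (fun t s s' => p s (π t s) s') (fun t s => r t s (π t s)) T 0 s₀ := by
    intro π
    have h := traj_eq_Wrec (fun t s s' => p s (π t s) s') (fun t s => r t s (π t s))
      (fun t s => hp_row s (π t s)) T 0 s₀
    simp only [zero_add] at h
    rw [hJ]
    exact h
  -- any policy's value is at most V
  have hle : ∀ (π : ℕ → S → A) (n t₀ : ℕ), t₀ + n = T → ∀ s,
      Wrec (fun t s s' => p s (π t s) s') (fun t s => r t s (π t s)) n t₀ s ≤ V t₀ s := by
    intro π n
    induction n with
    | zero =>
      intro t₀ ht s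
      have h0 : t₀ = T := by omega
      rw [Wrec, h0, hVT]
      exact Finset.le_sup' (fun a : A => r T s a) (Finset.mem_univ _)
    | succ n ih =>
      intro t₀ ht s
      have htT : t₀ < T := by omega
      rw [Wrec, hVt t₀ htT s]
      calc r t₀ s (π t₀ s) + ∑ s', p s (π t₀ s) s' *
              Wrec (fun t s s' => p s (π t s) s') (fun t s => r t s (π t s)) n (t₀+1) s'
          ≤ r t₀ s (π t₀ s) + ∑ s', p s (π t₀ s) s' * V (t₀+1) s' := by
            apply add_le_add_right
            apply Finset.sum_le_sum
            intro s' _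
            exact mul_le_mul_of_nonneg_left (ih (t₀+1) (by omega) s') (hp_nonneg s _ s')
        _ ≤ _ := Finset.le_sup' (fun a : A => r t₀ s a + ∑ s', p s a s' * V (t₀ + 1) s')
            (Finset.mem_univ _)
  -- greedy policy
  have hex : ∀ (t : ℕ) (s : S), ∃ a : A,
      (t = T → r T s a = V T s) ∧
      (t < T → r t s a + ∑ s', p s a s' * V (t+1) s' = V t s) := by
    intro t s
    by_cases h : t < T
    · obtain ⟨a, _, ha⟩ := Finset.exists_mem_eq_sup' Finset.univ_nonempty
        (fun a : A => r t s a + ∑ s', p s a s' * V (t+1) s')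
      exact ⟨a, fun h' => absurd h (by omega), fun _ => by rw [hVt t h s, ha]⟩
    · obtain ⟨a, _, ha⟩ := Finset.exists_mem_eq_sup' Finset.univ_nonempty
        (fun a : A => r t s a)
      exact ⟨a, fun h' => by subst h'; rw [hVT s]; exact ha.symm, fun h' => absurd h' h⟩
  choose πs hπT hπt using hex
  have hstar : ∀ (n t₀ : ℕ), t₀ + n = T → ∀ s,
      Wrec (fun t s s' => p s (πs t s) s') (fun t s => r t s (πs t s)) n t₀ s = V t₀ s := by
    intro n
    induction n with
    | zero =>
      intro t₀ ht s
      have h0 : t₀ = T := by omega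
      rw [Wrec, h0]
      exact hπT T s rfl
    | succ n ih =>
      intro t₀ ht s
      rw [Wrec]
      have : ∀ s' : S, Wrec (fun t s s' => p s (πs t s) s')
          (fun t s => r t s (πs t s)) n (t₀+1) s' = V (t₀+1) s' :=
        fun s' => ih (t₀+1) (by omega) s'
      simp_rw [this]
      exact hπt t₀ s (by omega)
  constructor
  · exact ⟨πs, by rw [hJW πs, hstar T 0 (by omega) s₀]⟩
  · rintro x ⟨π, hx⟩
    rw [← hx, hJW π]
    exact hle π T 0 (by omega) s₀
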